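/- If G is a minimal counterexample (as defined in the context), then every B₁-vertex v of G has at least one 2-step neighbor of degree 2; in particular, v has a neighbor in B₁ and a neighbor in A₂. -/

import Mathlib

open Set

/-- The degree of a vertex `v` in a simple graph `G`. -/
noncomputable def deg {V : Type*} (G : SimpleGraph V) (v : V) : ℕ :=
  (G.neighborSet v).ncard

/-- `S` is a dominating set of `G`: every vertex not in `S` has a neighbor in `S`. -/
def IsDomSet {V : Type*} (G : SimpleGraph V) (S : Set V) : Prop :=
  ∀ v ∉ S, ∃ u ∈ S, G.Adj u v

/-- `S` is an independent dominating set of `G`. -/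
def IsIndepDomSet {V : Type*} (G : SimpleGraph V) (S : Set V) : Prop :=
  IsDomSet G S ∧ ∀ u ∈ S, ∀ v ∈ S, ¬ G.Adj u v

/-- The independent domination number `i(G)`. -/
noncomputable def indepDomNum {V : Type*} (G : SimpleGraph V) : ℕ :=
  sInf {n | ∃ S : Set V, IsIndepDomSet G S ∧ S.ncard = n}

/-- The domination number `γ(G)`. -/
noncomputable def domNum {V : Type*} (G : SimpleGraph V) : ℕ :=
  sInf {n | ∃ S : Set V, IsDomSet G S ∧ S.ncard = n}

/-- `G` contains no cycle on 4 vertices as a subgraph. -/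
def NoFourCycle {V : Type*} (G : SimpleGraph V) : Prop :=
  ¬ ∃ a b c d : V, a ≠ b ∧ a ≠ c ∧ a ≠ d ∧ b ≠ c ∧ b ≠ d ∧ c ≠ d ∧
      G.Adj a b ∧ G.Adj b c ∧ G.Adj c d ∧ G.Adj d a

/-- `nk G k` is the number of vertices of degree `k` in `G`. -/
noncomputable def nk {V : Type*} (G : SimpleGraph V) (k : ℕ) : ℕ :=
  {v | deg G v = k}.ncard

/-- The weight of a vertex: 14, 9, 6, 5 according as its degree is 0, 1, 2, 3. -/
noncomputable def wt {V : Type*} (G : SimpleGraph V) (v : V) : ℕ :=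
  if deg G v = 0 then 14 else if deg G v = 1 then 9 else if deg G v = 2 then 6 else 5

/-- The weight of a set of vertices: the sum of their weights. -/
noncomputable def wtSet {V : Type*} (G : SimpleGraph V) (X : Set V) : ℕ :=
  ∑ᶠ v ∈ X, wt G v

/-- The weight of the whole graph `G`. -/
noncomputable def wtGraph {V : Type*} (G : SimpleGraph V) : ℕ :=
  wtSet G Set.univ

/-- `G` is a minimal counterexample: subcubic, no 4-cycle, `14·i(G) > w(G)`,
and every proper subgraph `H` of `G` satisfies `14·i(H) ≤ w(H)`. -/
def MinimalCounterexample {V : Type*} [Fintype V] (G : SimpleGraph V) : Prop :=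
  (∀ v, deg G v ≤ 3) ∧ NoFourCycle G ∧ wtGraph G < 14 * indepDomNum G ∧
    ∀ H : G.Subgraph, H ≠ ⊤ → 14 * indepDomNum H.coe ≤ wtGraph H.coe

/-- `Aset G i`: vertices of degree 3 with exactly `i` neighbors of degree 2. -/
def Aset {V : Type*} (G : SimpleGraph V) (i : ℕ) : Set V :=
  {v | deg G v = 3 ∧ {u | G.Adj v u ∧ deg G u = 2}.ncard = i}

/-- `Bset G i`: vertices of degree 2 with exactly `i` neighbors of degree 2. -/
def Bset {V : Type*} (G : SimpleGraph V) (i : ℕ) : Set V :=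
  {v | deg G v = 2 ∧ {u | G.Adj v u ∧ deg G u = 2}.ncard = i}

/-- `w` is a 2-step neighbor of `v`: it is joined to `v` by a path of length 2. -/
def TwoStep {V : Type*} (G : SimpleGraph V) (v w : V) : Prop :=
  w ≠ v ∧ ∃ u, G.Adj v u ∧ G.Adj u w

/- ## Auxiliary machinery -/


noncomputable def wtd (d : ℕ) : ℕ :=
  if d = 0 then 14 else if d = 1 then 9 else if d = 2 then 6 else 5

lemma wt_eq_wtd {V : Type*} (G : SimpleGraph V) (v : V) : wt G v = wtd (deg G v) := rfl

lemma exists_ids {W : Type*} [Finite W] (G : SimpleGraph W) : ∃ S, IsIndepDomSet G S := by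
  obtain ⟨S, hS, hmax⟩ := Set.Finite.exists_maximal
    (Set.toFinite {S : Set W | ∀ u ∈ S, ∀ v ∈ S, ¬ G.Adj u v}) ⟨∅, by simp⟩
  refine ⟨S, ?_, hS⟩
  intro z hz
  by_contra hcon
  push_neg at hcon
  have hins : insert z S ∈ {S : Set W | ∀ u ∈ S, ∀ v ∈ S, ¬ G.Adj u v} := by
    intro a ha b hb
    rcases ha with rfl | ha
    · rcases hb with rfl | hb
      · exact G.irrefl
      · intro h
        exact hcon b hb (G.adj_symm h)
    · rcases hb with rfl | hb
      · intro h
        exact hcon a ha h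
      · exact hS a ha b hb
  have := hmax hins (subset_insert z S)
  exact hz (this (mem_insert z S))

lemma indepDomNum_le {W : Type*} (G : SimpleGraph W) {S : Set W} (h : IsIndepDomSet G S) :
    indepDomNum G ≤ S.ncard :=
  Nat.sInf_le ⟨S, h, rfl⟩

lemma exists_ids_card {W : Type*} [Finite W] (G : SimpleGraph W) :
    ∃ S, IsIndepDomSet G S ∧ S.ncard = indepDomNum G := by
  obtain ⟨S, hS⟩ := exists_ids G
  exact Nat.sInf_mem (s := {n | ∃ S, IsIndepDomSet G S ∧ S.ncard = n}) ⟨S.ncard, S, hS, rfl⟩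

lemma master {V : Type*} [Fintype V] {G : SimpleGraph V} (hG : MinimalCounterexample G)
    (t : V) (D : Set V)
    (hD : ∀ z ∈ D, z ∉ insert t (G.neighborSet t))
    (hout : ∀ z, z ∉ insert t (G.neighborSet t) → z ∉ D →
       G.neighborSet z ∩ insert t (G.neighborSet t) = ∅)
    (hnum : 14 + ∑ᶠ z ∈ D, wtd ((G.neighborSet z ∩ (insert t (G.neighborSet t))ᶜ).ncard)
        ≤ wtSet G (insert t (G.neighborSet t)) + ∑ᶠ z ∈ D, wt G z) : False := by
  classical
  set X := insert t (G.neighborSet t) with hX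
  set S := Xᶜ with hSdef
  have htX : t ∈ X := mem_insert t _
  have hDS : D ⊆ S := fun z hz => hD z hz
  set H : G.Subgraph := (⊤ : G.Subgraph).induce S with hH
  have hne : H ≠ ⊤ := by
    intro h
    have h1 : H.verts = Set.univ := by rw [h, SimpleGraph.Subgraph.verts_top]
    have h2 : t ∈ S := Set.eq_univ_iff_forall.mp h1 t
    exact h2 htX
  -- degree formula in H.coe
  have hdeg : ∀ w : ↥S, deg H.coe w = (G.neighborSet ↑w ∩ S).ncard := by
    intro w
    have himg : Subtype.val '' (H.coe.neighborSet w) = G.neighborSet ↑w ∩ S := by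
      ext z
      simp only [Set.mem_image, SimpleGraph.mem_neighborSet, SimpleGraph.Subgraph.coe_adj,
        SimpleGraph.Subgraph.induce_adj, SimpleGraph.Subgraph.top_adj, Set.mem_inter_iff]
      constructor
      · rintro ⟨hz, ⟨hw', hz', hadj⟩, rfl⟩
        exact ⟨hadj, hz'⟩
      · rintro ⟨hadj, hz⟩
        exact ⟨⟨z, hz⟩, ⟨w.2, hz, hadj⟩, rfl⟩
    rw [show deg H.coe w = (H.coe.neighborSet w).ncard from rfl, ← himg, Set.ncard_image_of_injective _ Subtype.val_injective]
  have hwtH : wtGraph H.coe = ∑ᶠ z ∈ S, wtd ((G.neighborSet z ∩ S).ncard) := by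
    rw [wtGraph, wtSet, finsum_mem_univ,
      ← finsum_set_coe_eq_finsum_mem (s := S) (f := fun z => wtd ((G.neighborSet z ∩ S).ncard))]
    exact finsum_congr fun w => by rw [wt_eq_wtd, hdeg w]
  obtain ⟨I, hI, hIcard⟩ := exists_ids_card H.coe
  set J : Set V := (Subtype.val '' I) ∪ {t} with hJ
  have hJind : IsIndepDomSet G J := by
    constructor
    · intro z hz
      by_cases hzX : z ∈ X
      · rcases hzX with rfl | hzN
        · exact absurd (mem_union_right _ rfl) hz
        · exact ⟨t, mem_union_right _ rfl, hzN⟩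
      · have hzS : z ∈ S := hzX
        have hzI : (⟨z, hzS⟩ : ↥S) ∉ I := fun h => hz (mem_union_left _ ⟨⟨z, hzS⟩, h, rfl⟩)
        obtain ⟨i, hiI, hadj⟩ := hI.1 _ hzI
        refine ⟨↑i, mem_union_left _ ⟨i, hiI, rfl⟩, ?_⟩
        have := hadj
        replace this : ((⊤ : G.Subgraph).induce S).Adj (↑i : V) z := this
        rw [SimpleGraph.Subgraph.induce_adj] at this
        exact this.2.2
    · intro a ha b hb hadj
      rcases ha with ⟨a', ha', rfl⟩ | ha
      · rcases hb with ⟨b', hb', rfl⟩ | hb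
        · refine hI.2 a' ha' b' hb' ?_
          rw [SimpleGraph.Subgraph.coe_adj, SimpleGraph.Subgraph.induce_adj,
            SimpleGraph.Subgraph.top_adj]
          exact ⟨a'.2, b'.2, hadj⟩
        · rcases hb with rfl
          exact a'.2 (mem_insert_of_mem _ (G.adj_symm hadj))
      · rcases ha with rfl
        rcases hb with ⟨b', hb', rfl⟩ | hb
        · exact b'.2 (mem_insert_of_mem _ hadj)
        · rcases hb with rfl
          exact G.irrefl hadj
  have hJcard : J.ncard ≤ I.ncard + 1 := by
    calc J.ncard ≤ (Subtype.val '' I).ncard + ({t} : Set V).ncard :=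
            Set.ncard_union_le _ _
    _ = I.ncard + 1 := by rw [Set.ncard_image_of_injective _ Subtype.val_injective,
          Set.ncard_singleton]
  have h1 : indepDomNum G ≤ indepDomNum H.coe + 1 := by
    calc indepDomNum G ≤ J.ncard := indepDomNum_le G hJind
    _ ≤ I.ncard + 1 := hJcard
    _ = indepDomNum H.coe + 1 := by rw [hIcard]
  have h2 := hG.2.2.2 H hne
  have h3 := hG.2.2.1
  have hsplit2 : ∀ f : V → ℕ, ∑ᶠ z ∈ S, f z = ∑ᶠ z ∈ S \ D, f z + ∑ᶠ z ∈ D, f z := by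
    intro f
    rw [← finsum_mem_union disjoint_sdiff_left (Set.toFinite _) (Set.toFinite _),
      Set.diff_union_of_subset hDS]
  have heq : ∀ z ∈ S \ D, wtd ((G.neighborSet z ∩ S).ncard) = wt G z := by
    intro z hz
    have h0 := hout z hz.1 hz.2
    have hsub : G.neighborSet z ∩ S = G.neighborSet z := by
      rw [inter_eq_left]
      intro w hw
      intro hwX
      exact absurd h0 (Set.nonempty_iff_ne_empty.1 ⟨w, hw, hwX⟩)
    rw [hsub]
    exact (wt_eq_wtd G z).symm
  have hHval : wtGraph H.coe = ∑ᶠ z ∈ S \ D, wt G z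
      + ∑ᶠ z ∈ D, wtd ((G.neighborSet z ∩ S).ncard) := by
    rw [hwtH, hsplit2]
    congr 1
    exact finsum_mem_congr rfl heq
  have hsplit1 : wtGraph G = wtSet G X + (∑ᶠ z ∈ S \ D, wt G z + ∑ᶠ z ∈ D, wt G z) := by
    rw [wtGraph, wtSet, show (univ : Set V) = X ∪ S from (union_compl_self X).symm,
      finsum_mem_union disjoint_compl_right (Set.toFinite _) (Set.toFinite _), ← hsplit2]
    rfl
  have hfinal : wtGraph G < wtGraph H.coe + 14 := by
    calc wtGraph G < 14 * indepDomNum G := h3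
    _ ≤ 14 * (indepDomNum H.coe + 1) := by exact Nat.mul_le_mul_left _ h1
    _ = 14 * indepDomNum H.coe + 14 := by ring
    _ ≤ wtGraph H.coe + 14 := by omega
  rw [hsplit1] at hfinal
  rw [hHval] at hfinal
  omega

set_option linter.unusedSectionVars false
section Helpers
variable {V : Type*} [Fintype V] {G : SimpleGraph V}

lemma deg_pos_of_adj {a b : V} (h : G.Adj a b) : 1 ≤ deg G a :=
  (Set.ncard_pos (Set.toFinite _)).2 ⟨b, h⟩

lemma nbr_eq_single {a b : V} (h1 : deg G a = 1) (hb : G.Adj a b) :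
    G.neighborSet a = {b} := by
  obtain ⟨c, hc⟩ := Set.ncard_eq_one.1 h1
  have : (b : V) ∈ G.neighborSet a := hb
  rw [hc] at this ⊢
  rw [← this]

lemma nbr_eq_pair {a b c : V} (h2 : deg G a = 2) (hb : G.Adj a b) (hc : G.Adj a c)
    (hbc : b ≠ c) : G.neighborSet a = {b, c} := by
  refine (Set.eq_of_subset_of_ncard_le ?_ ?_ (Set.toFinite _)).symm
  · intro z hz
    rcases hz with rfl | rfl
    · exact hb
    · exact hc
  · rw [show (G.neighborSet a).ncard = 2 from h2, Set.ncard_pair hbc]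

lemma nbr_eq_triple {a b c d : V} (h3 : deg G a = 3) (hb : G.Adj a b) (hc : G.Adj a c)
    (hd : G.Adj a d) (hbc : b ≠ c) (hbd : b ≠ d) (hcd : c ≠ d) :
    G.neighborSet a = {b, c, d} := by
  refine (Set.eq_of_subset_of_ncard_le ?_ ?_ (Set.toFinite _)).symm
  · intro z hz
    rcases hz with rfl | rfl | rfl
    · exact hb
    · exact hc
    · exact hd
  · rw [show (G.neighborSet a).ncard = 3 from h3]
    exact le_of_eq (Set.ncard_eq_three.2 ⟨b, c, d, hbc, hbd, hcd, rfl⟩).symm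

lemma other_nbr_of_deg2 {a b : V} (h2 : deg G a = 2) (hb : G.Adj a b) :
    ∃ c, c ≠ b ∧ G.Adj a c ∧ G.neighborSet a = {b, c} := by
  obtain ⟨p, q, hpq, hN⟩ := Set.ncard_eq_two.1 h2
  have hbmem : (b : V) ∈ G.neighborSet a := hb
  rw [hN] at hbmem
  rcases hbmem with rfl | rfl
  · refine ⟨q, fun h => hpq h.symm, ?_, hN⟩
    have : q ∈ G.neighborSet a := by rw [hN]; right; rfl
    exact this
  · refine ⟨p, fun h => hpq h, ?_, ?_⟩
    · have : p ∈ G.neighborSet a := by rw [hN]; left; rfl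
      exact this
    · rw [hN, Set.pair_comm]

lemma other_nbrs_of_deg3 {a b : V} (h3 : deg G a = 3) (hb : G.Adj a b) :
    ∃ c d, c ≠ b ∧ d ≠ b ∧ c ≠ d ∧ G.Adj a c ∧ G.Adj a d ∧
      G.neighborSet a = {b, c, d} := by
  obtain ⟨p, q, r, hpq, hpr, hqr, hN⟩ := Set.ncard_eq_three.1 h3
  have hmem : ∀ z ∈ ({p, q, r} : Set V), G.Adj a z := by
    intro z hz
    have : z ∈ G.neighborSet a := by rw [hN]; exact hz
    exact this
  have hbmem : (b : V) ∈ ({p, q, r} : Set V) := by rw [← hN]; exact hb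
  rcases hbmem with rfl | rfl | rfl
  · exact ⟨q, r, fun h => hpq h.symm, fun h => hpr h.symm, hqr,
      hmem q (by simp), hmem r (by simp), hN⟩
  · refine ⟨p, r, hpq, fun h => hqr h.symm, hpr, hmem p (by simp), hmem r (by simp), ?_⟩
    rw [hN]; ext z; simp; tauto
  · refine ⟨p, q, hpr, hqr, hpq, hmem p (by simp), hmem q (by simp), ?_⟩
    rw [hN]; ext z; simp; tauto

lemma ncard_inter_compl (z : V) (X : Set V) :
    (G.neighborSet z ∩ Xᶜ).ncard = deg G z - (G.neighborSet z ∩ X).ncard := by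
  rw [deg, show G.neighborSet z ∩ Xᶜ = G.neighborSet z \ (G.neighborSet z ∩ X) from by
    ext w; simp only [Set.mem_inter_iff, Set.mem_compl_iff, Set.mem_diff]; tauto,
    Set.ncard_diff Set.inter_subset_left (Set.toFinite _)]

lemma wtd_le14 (d : ℕ) : wtd d ≤ 14 := by unfold wtd; split_ifs <;> omega

lemma wtd_ge5 (d : ℕ) : 5 ≤ wtd d := by unfold wtd; split_ifs <;> omega

lemma wtd_pred5 {d : ℕ} (h : 1 ≤ d) : wtd (d - 1) ≤ wtd d + 5 := by
  unfold wtd; split_ifs <;> omega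

lemma wtd_pred3 {d : ℕ} (h : 2 ≤ d) : wtd (d - 1) ≤ wtd d + 3 := by
  unfold wtd; split_ifs <;> omega

lemma wtd_two_drops {d1 d2 : ℕ} (h1 : 1 ≤ d1) (h2 : 1 ≤ d2) (h : ¬(d1 = 1 ∧ d2 = 1)) :
    wtd (d1 - 1) + wtd (d2 - 1) ≤ 8 + wtd d1 + wtd d2 := by
  by_cases e1 : d1 = 1
  · have e2 : 2 ≤ d2 := by omega
    have := wtd_pred3 e2
    subst e1
    simp only [Nat.sub_self]
    have h14 : wtd 0 = 14 := rfl
    have h9 : wtd 1 = 9 := rfl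
    omega
  · have e1' : 2 ≤ d1 := by omega
    have := wtd_pred3 e1'
    have := wtd_pred5 h2
    omega

lemma wtd_two : wtd 2 = 6 := rfl
lemma wtd_one : wtd 1 = 9 := rfl
lemma wtd_zero : wtd 0 = 14 := rfl

lemma wt_of_deg1 {a : V} (h : deg G a = 1) : wt G a = 9 := by
  rw [wt_eq_wtd, h]; rfl
lemma wt_of_deg2 {a : V} (h : deg G a = 2) : wt G a = 6 := by
  rw [wt_eq_wtd, h]; rfl
lemma wt_of_deg3 {a : V} (h : deg G a = 3) : wt G a = 5 := by
  rw [wt_eq_wtd, h]; rfl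

lemma finsum_mem_quad' : True := trivial

lemma finsum_mem_triple {M : Type*} [AddCommMonoid M] {a b c : V} (f : V → M)
    (hab : a ≠ b) (hac : a ≠ c) (hbc : b ≠ c) :
    ∑ᶠ z ∈ ({a, b, c} : Set V), f z = f a + (f b + f c) := by
  rw [show ({a, b, c} : Set V) = insert a {b, c} from rfl,
    finsum_mem_insert f (by simp [hab, hac]) (Set.toFinite _), finsum_mem_pair hbc]

lemma finsum_mem_quad {M : Type*} [AddCommMonoid M] {a b c d : V} (f : V → M)
    (hab : a ≠ b) (hac : a ≠ c) (had : a ≠ d) (hbc : b ≠ c) (hbd : b ≠ d) (hcd : c ≠ d) :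
    ∑ᶠ z ∈ ({a, b, c, d} : Set V), f z = f a + (f b + (f c + f d)) := by
  rw [show ({a, b, c, d} : Set V) = insert a {b, c, d} from rfl,
    finsum_mem_insert f (by simp [hab, hac, had]) (Set.toFinite _),
    finsum_mem_triple f hbc hbd hcd]

end Helpers

section Helpers2
variable {V : Type*} [Fintype V] {G : SimpleGraph V}

lemma adj_mem_single {a b z : V} (hN : G.neighborSet a = {b}) (h : G.Adj z a) : z = b := by
  have : z ∈ G.neighborSet a := G.adj_symm h
  rwa [hN] at this

lemma adj_mem_pair {a b c z : V} (hN : G.neighborSet a = {b, c}) (h : G.Adj z a) :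
    z = b ∨ z = c := by
  have : z ∈ G.neighborSet a := G.adj_symm h
  rwa [hN] at this

lemma adj_mem_triple {a b c d z : V} (hN : G.neighborSet a = {b, c, d}) (h : G.Adj z a) :
    z = b ∨ z = c ∨ z = d := by
  have : z ∈ G.neighborSet a := G.adj_symm h
  rwa [hN] at this

lemma adj_of_nbr {a z : V} {s : Set V} (hN : G.neighborSet a = s) (h : z ∈ s) :
    G.Adj a z := by
  have : z ∈ G.neighborSet a := by rw [hN]; exact h
  exact this

end Helpers2

/-- In a minimal counterexample, every `B₁`-vertex `v` has a 2-step neighbor of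
degree 2; in particular, `v` has a `B₁`-neighbor and an `A₂`-neighbor. -/
theorem B1_vertex_structure {V : Type*} [Fintype V] (G : SimpleGraph V)
    (hG : MinimalCounterexample G) (v : V) (hv : v ∈ Bset G 1) :
    (∃ w, TwoStep G v w ∧ deg G w = 2) ∧
      (∃ u, G.Adj v u ∧ u ∈ Bset G 1) ∧ (∃ u, G.Adj v u ∧ u ∈ Aset G 2) := by
  classical
  obtain ⟨hsub, hC4, hlt, hmin⟩ := id hG
  obtain ⟨hvdeg, hvone⟩ := hv
  obtain ⟨u, hu⟩ := Set.ncard_eq_one.1 hvone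
  have humem : G.Adj v u ∧ deg G u = 2 := by
    have : u ∈ {w | G.Adj v w ∧ deg G w = 2} := by rw [hu]; rfl
    exact this
  have hvu : G.Adj v u := humem.1
  have hudeg : deg G u = 2 := humem.2
  obtain ⟨x, hxu, hvx, hNv⟩ := other_nbr_of_deg2 hvdeg hvu
  have hxdeg2 : deg G x ≠ 2 := fun h => hxu (by
    have : x ∈ {w | G.Adj v w ∧ deg G w = 2} := ⟨hvx, h⟩
    rwa [hu] at this)
  obtain ⟨y, hyv, huy, hNu⟩ := other_nbr_of_deg2 hudeg (G.adj_symm hvu)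
  have hXveq : insert v (G.neighborSet v) = {v, u, x} := by rw [hNv]
  have hvu' : v ≠ u := hvu.ne
  have hvx' : v ≠ x := hvx.ne
  have hux : u ≠ x := fun h => hxu h.symm
  have hyu : y ≠ u := huy.ne'
  -- M-A : deg x ≠ 1
  have hxdeg1 : deg G x ≠ 1 := by
    intro hx1
    have hNx : G.neighborSet x = {v} := nbr_eq_single hx1 (G.adj_symm hvx)
    have hyx : y ≠ x := by
      rintro rfl
      exact hvu' (adj_mem_single hNx huy).symm
    refine master hG v {y} ?_ ?_ ?_
    · intro z hz
      rw [Set.mem_singleton_iff] at hz; subst hz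
      simp only [hXveq, Set.mem_insert_iff, Set.mem_singleton_iff]
      push_neg
      exact ⟨hyv, hyu, hyx⟩
    · intro z hzX hzD
      rw [Set.mem_singleton_iff] at hzD
      rw [hXveq] at hzX ⊢
      rw [Set.eq_empty_iff_forall_notMem]
      rintro w ⟨hw1, hw2⟩
      have hadj : G.Adj z w := hw1
      rcases hw2 with rfl | rfl | rfl
      · rcases adj_mem_pair hNv hadj with rfl | rfl
        · exact hzX (by simp)
        · exact hzX (by simp)
      · rcases adj_mem_pair hNu hadj with rfl | rfl
        · exact hzX (by simp)
        · exact hzD rfl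
      · rcases adj_mem_single hNx hadj
        exact hzX (by simp)
    · have hNyX : G.neighborSet y ∩ ({v, u, x} : Set V) = {u} := by
        ext w
        simp only [Set.mem_inter_iff, SimpleGraph.mem_neighborSet, Set.mem_insert_iff,
          Set.mem_singleton_iff]
        constructor
        · rintro ⟨hadj, rfl | rfl | rfl⟩
          · rcases adj_mem_pair hNv hadj with h1 | h1
            · exact absurd h1 hyu
            · exact absurd h1 hyx
          · rfl
          · exact absurd (adj_mem_single hNx hadj) hyv
        · rintro rfl
          exact ⟨G.adj_symm huy, Or.inr (Or.inl rfl)⟩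
      have hcount : (G.neighborSet y ∩ (insert v (G.neighborSet v))ᶜ).ncard = deg G y - 1 := by
        rw [ncard_inter_compl, hXveq, hNyX, Set.ncard_singleton]
      rw [finsum_mem_singleton, finsum_mem_singleton, hcount, hXveq, wtSet,
        finsum_mem_triple _ hvu' hvx' hux, wt_of_deg2 hvdeg, wt_of_deg2 hudeg, wt_of_deg1 hx1]
      have hb := wtd_pred5 (deg_pos_of_adj (G.adj_symm huy))
      have hwy := wt_eq_wtd G y
      omega
  have hxdeg : deg G x = 3 := by
    have h0 : 1 ≤ deg G x := deg_pos_of_adj (G.adj_symm hvx)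
    have := hsub x
    omega
  obtain ⟨x1, x2, hx1v, hx2v, hx12, hxx1, hxx2, hNx⟩ := other_nbrs_of_deg3 hxdeg (G.adj_symm hvx)
  have hadjux : ∀ (_ : G.Adj u x), y = x := by
    intro h
    rcases adj_mem_pair hNu (G.adj_symm h) with h1 | h1
    · exact absurd h1.symm hvx'
    · exact h1.symm
  -- deg y = 3
  have hydeg : deg G y = 3 := by
    by_cases hyx : y = x
    · rw [hyx]; exact hxdeg
    have hnux : ¬ G.Adj u x := fun h => hyx (hadjux h)
    have hnxy : ¬ G.Adj x y := by
      intro h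
      exact hC4 ⟨v, u, y, x, hvu', Ne.symm hyv, hvx', Ne.symm hyu, hux, hyx,
        hvu, huy, G.adj_symm h, G.adj_symm hvx⟩
    have hXueq : insert u (G.neighborSet u) = {u, v, y} := by rw [hNu]
    have hy1 : deg G y ≠ 1 := by
      intro hy1
      have hNy : G.neighborSet y = {u} := nbr_eq_single hy1 (G.adj_symm huy)
      refine master hG u {x} ?_ ?_ ?_
      · intro z hz
        rw [Set.mem_singleton_iff] at hz; subst hz
        simp only [hXueq, Set.mem_insert_iff, Set.mem_singleton_iff]
        push_neg
        exact ⟨Ne.symm hux, Ne.symm hvx', Ne.symm hyx⟩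
      · intro z hzX hzD
        rw [Set.mem_singleton_iff] at hzD
        rw [hXueq] at hzX ⊢
        rw [Set.eq_empty_iff_forall_notMem]
        rintro w ⟨hw1, hw2⟩
        have hadj : G.Adj z w := hw1
        rcases hw2 with rfl | rfl | rfl
        · rcases adj_mem_pair hNu hadj with rfl | rfl
          · exact hzX (by simp)
          · exact hzX (by simp)
        · rcases adj_mem_pair hNv hadj with rfl | rfl
          · exact hzX (by simp)
          · exact hzD rfl
        · rcases adj_mem_single hNy hadj
          exact hzX (by simp)
      · have hNxX : G.neighborSet x ∩ ({u, v, y} : Set V) = {v} := by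
          ext w
          simp only [Set.mem_inter_iff, SimpleGraph.mem_neighborSet, Set.mem_insert_iff,
            Set.mem_singleton_iff]
          constructor
          · rintro ⟨hadj, rfl | rfl | rfl⟩
            · exact absurd (G.adj_symm hadj) hnux
            · rfl
            · exact absurd hadj hnxy
          · rintro rfl
            exact ⟨G.adj_symm hvx, Or.inr (Or.inl rfl)⟩
        have hcount : (G.neighborSet x ∩ (insert u (G.neighborSet u))ᶜ).ncard = 2 := by
          rw [ncard_inter_compl, hXueq, hNxX, Set.ncard_singleton, hxdeg]
        rw [finsum_mem_singleton, finsum_mem_singleton, hcount, hXueq, wtSet,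
          finsum_mem_triple _ (Ne.symm hvu') (huy.ne) (Ne.symm hyv), wt_of_deg2 hvdeg,
          wt_of_deg2 hudeg, wt_of_deg1 hy1, wt_of_deg3 hxdeg]
        have h6 : wtd 2 = 6 := rfl
        omega
    have hy2' : deg G y ≠ 2 := by
      intro hy2
      obtain ⟨z, hzu, hyz, hNy⟩ := other_nbr_of_deg2 hy2 (G.adj_symm huy)
      have hzv : z ≠ v := by
        rintro rfl
        rcases adj_mem_pair hNv (hyz) with h1 | h1
        · exact hyu h1
        · exact hyx h1
      have hzx : z ≠ x := by
        rintro rfl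
        exact hnxy (G.adj_symm hyz)
      have hzy : z ≠ y := hyz.ne'
      by_cases hz1 : deg G z = 1
      · -- M-D
        have hNz : G.neighborSet z = {y} := nbr_eq_single hz1 (G.adj_symm hyz)
        have hXyeq : insert y (G.neighborSet y) = {y, u, z} := by rw [hNy]
        refine master hG y {v} ?_ ?_ ?_
        · intro w hw
          rw [Set.mem_singleton_iff] at hw; subst hw
          simp only [hXyeq, Set.mem_insert_iff, Set.mem_singleton_iff]
          push_neg
          exact ⟨Ne.symm hyv, hvu', Ne.symm hzv⟩
        · intro w hwX hwD
          rw [Set.mem_singleton_iff] at hwD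
          rw [hXyeq] at hwX ⊢
          rw [Set.eq_empty_iff_forall_notMem]
          rintro w' ⟨hw1, hw2⟩
          have hadj : G.Adj w w' := hw1
          rcases hw2 with rfl | rfl | rfl
          · rcases adj_mem_pair hNy hadj with rfl | rfl
            · exact hwX (by simp)
            · exact hwX (by simp)
          · rcases adj_mem_pair hNu hadj with rfl | rfl
            · exact hwD rfl
            · exact hwX (by simp)
          · rcases adj_mem_single hNz hadj
            exact hwX (by simp)
        · have hNvX : G.neighborSet v ∩ ({y, u, z} : Set V) = {u} := by
            ext w
            simp only [Set.mem_inter_iff, SimpleGraph.mem_neighborSet, Set.mem_insert_iff,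
              Set.mem_singleton_iff]
            constructor
            · rintro ⟨hadj, rfl | rfl | rfl⟩
              · rcases adj_mem_pair hNv (G.adj_symm hadj) with h1 | h1
                · exact absurd h1 hyu
                · exact absurd h1 hyx
              · rfl
              · rcases adj_mem_pair hNv (G.adj_symm hadj) with h1 | h1
                · exact absurd h1 hzu
                · exact absurd h1 hzx
            · rintro rfl
              exact ⟨hvu, Or.inr (Or.inl rfl)⟩
          have hcount : (G.neighborSet v ∩ (insert y (G.neighborSet y))ᶜ).ncard = 1 := by
            rw [ncard_inter_compl, hXyeq, hNvX, Set.ncard_singleton, hvdeg]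
          rw [finsum_mem_singleton, finsum_mem_singleton, hcount, hXyeq, wtSet,
            finsum_mem_triple _ hyu (Ne.symm hzy) (Ne.symm hzu), wt_of_deg2 hvdeg,
            wt_of_deg2 hudeg, wt_of_deg2 hy2, wt_of_deg1 hz1]
          have h9 : wtd 1 = 9 := rfl
          omega
      · -- M-C
        have hz2 : 2 ≤ deg G z := by
          have := deg_pos_of_adj (G.adj_symm hyz)
          omega
        have hnzu : ¬ G.Adj z u := by
          intro h
          rcases adj_mem_pair hNu (h) with h1 | h1
          · exact hzv h1
          · exact hzy h1
        have hnzv : ¬ G.Adj z v := by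
          intro h
          rcases adj_mem_pair hNv h with h1 | h1
          · exact (hzu h1).elim
          · exact hzx h1
        refine master hG u {x, z} ?_ ?_ ?_
        · intro w hw
          rcases hw with rfl | rfl
          · simp only [hXueq, Set.mem_insert_iff, Set.mem_singleton_iff]
            push_neg
            exact ⟨Ne.symm hux, Ne.symm hvx', Ne.symm hyx⟩
          · simp only [hXueq, Set.mem_insert_iff, Set.mem_singleton_iff]
            push_neg
            exact ⟨hzu, hzv, hzy⟩
        · intro w hwX hwD
          simp only [Set.mem_insert_iff, Set.mem_singleton_iff] at hwD
          push_neg at hwD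
          rw [hXueq] at hwX ⊢
          rw [Set.eq_empty_iff_forall_notMem]
          rintro w' ⟨hw1, hw2⟩
          have hadj : G.Adj w w' := hw1
          rcases hw2 with rfl | rfl | rfl
          · rcases adj_mem_pair hNu hadj with rfl | rfl
            · exact hwX (by simp)
            · exact hwX (by simp)
          · rcases adj_mem_pair hNv hadj with rfl | rfl
            · exact hwX (by simp)
            · exact hwD.1 rfl
          · rcases adj_mem_pair hNy hadj with rfl | rfl
            · exact hwX (by simp)
            · exact hwD.2 rfl
        · have hNxX : G.neighborSet x ∩ ({u, v, y} : Set V) = {v} := by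
            ext w
            simp only [Set.mem_inter_iff, SimpleGraph.mem_neighborSet, Set.mem_insert_iff,
              Set.mem_singleton_iff]
            constructor
            · rintro ⟨hadj, rfl | rfl | rfl⟩
              · exact absurd (G.adj_symm hadj) hnux
              · rfl
              · exact absurd hadj hnxy
            · rintro rfl
              exact ⟨G.adj_symm hvx, Or.inr (Or.inl rfl)⟩
          have hNzX : G.neighborSet z ∩ ({u, v, y} : Set V) = {y} := by
            ext w
            simp only [Set.mem_inter_iff, SimpleGraph.mem_neighborSet, Set.mem_insert_iff,
              Set.mem_singleton_iff]
            constructor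
            · rintro ⟨hadj, rfl | rfl | rfl⟩
              · exact absurd hadj hnzu
              · exact absurd hadj hnzv
              · rfl
            · rintro rfl
              exact ⟨G.adj_symm hyz, Or.inr (Or.inr rfl)⟩
          have hcx : (G.neighborSet x ∩ (insert u (G.neighborSet u))ᶜ).ncard = 2 := by
            rw [ncard_inter_compl, hXueq, hNxX, Set.ncard_singleton, hxdeg]
          have hcz : (G.neighborSet z ∩ (insert u (G.neighborSet u))ᶜ).ncard = deg G z - 1 := by
            rw [ncard_inter_compl, hXueq, hNzX, Set.ncard_singleton]
          rw [finsum_mem_pair hzx.symm.symm.symm, finsum_mem_pair hzx.symm.symm.symm, hcx, hcz,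
            hXueq, wtSet, finsum_mem_triple _ (Ne.symm hvu') (huy.ne) (Ne.symm hyv),
            wt_of_deg2 hvdeg, wt_of_deg2 hudeg, wt_of_deg2 hy2, wt_of_deg3 hxdeg]
          have h6 : wtd 2 = 6 := rfl
          have hb := wtd_pred3 hz2
          have hwz := wt_eq_wtd G z
          omega
    have h0 : 1 ≤ deg G y := deg_pos_of_adj (G.adj_symm huy)
    have := hsub y
    omega
  -- u ∈ B1
  have huB1 : u ∈ Bset G 1 := by
    refine ⟨hudeg, ?_⟩
    have h : {w | G.Adj u w ∧ deg G w = 2} = {v} := by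
      ext w
      simp only [Set.mem_setOf_eq, Set.mem_singleton_iff]
      constructor
      · rintro ⟨hadj, hdeg2⟩
        rcases adj_mem_pair hNu (G.adj_symm hadj) with rfl | rfl
        · rfl
        · rw [hydeg] at hdeg2; omega
      · rintro rfl
        exact ⟨G.adj_symm hvu, hvdeg⟩
    rw [h, Set.ncard_singleton]
  -- main structural claim : x has exactly one degree-2 neighbor besides v
  have hmain : ∃ c, G.Adj x c ∧ c ≠ v ∧ deg G c = 2 ∧
      (∀ w, G.Adj x w → deg G w = 2 → w = v ∨ w = c) := by
    by_cases hyx : y = x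
    · rw [hyx] at huy hNu
      have ME : ∀ a : V, G.Adj x a → a ≠ u → a ≠ v → G.neighborSet x = {v, u, a} →
          deg G a = 2 → False := by
        intro a hxa hau hav hNx' ha2
        obtain ⟨za, hzax, haza, hNa⟩ := other_nbr_of_deg2 ha2 (G.adj_symm hxa)
        have hax : a ≠ x := hxa.ne'
        have hzav : za ≠ v := by
          rintro rfl
          rcases adj_mem_pair hNv haza with h1 | h1
          · exact hau h1
          · exact hax h1
        have hzau : za ≠ u := by
          rintro rfl
          rcases adj_mem_pair hNu haza with h1 | h1
          · exact hav h1
          · exact hax h1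
        have hzaa : za ≠ a := haza.ne'
        have hXxeq : insert x (G.neighborSet x) = {x, v, u, a} := by rw [hNx']
        refine master hG x {za} ?_ ?_ ?_
        · intro w hw
          rw [Set.mem_singleton_iff] at hw; subst hw
          simp only [hXxeq, Set.mem_insert_iff, Set.mem_singleton_iff]
          push_neg
          exact ⟨hzax, hzav, hzau, hzaa⟩
        · intro w hwX hwD
          rw [Set.mem_singleton_iff] at hwD
          rw [hXxeq] at hwX ⊢
          rw [Set.eq_empty_iff_forall_notMem]
          rintro w' ⟨hw1, hw2⟩
          have hadj : G.Adj w w' := hw1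
          rcases hw2 with rfl | rfl | rfl | rfl
          · rcases adj_mem_triple hNx' hadj with rfl | rfl | rfl
            · exact hwX (by simp)
            · exact hwX (by simp)
            · exact hwX (by simp)
          · rcases adj_mem_pair hNv hadj with rfl | rfl
            · exact hwX (by simp)
            · exact hwX (by simp)
          · rcases adj_mem_pair hNu hadj with rfl | rfl
            · exact hwX (by simp)
            · exact hwX (by simp)
          · rcases adj_mem_pair hNa hadj with rfl | rfl
            · exact hwX (by simp)
            · exact hwD rfl
        · have hNzaX : G.neighborSet za ∩ ({x, v, u, a} : Set V) = {a} := by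
            ext w
            simp only [Set.mem_inter_iff, SimpleGraph.mem_neighborSet, Set.mem_insert_iff,
              Set.mem_singleton_iff]
            constructor
            · rintro ⟨hadj, rfl | rfl | rfl | rfl⟩
              · rcases adj_mem_triple hNx' hadj with h1 | h1 | h1
                · exact absurd h1 hzav
                · exact absurd h1 hzau
                · exact absurd h1 hzaa
              · rcases adj_mem_pair hNv hadj with h1 | h1
                · exact absurd h1 hzau
                · exact absurd h1 hzax
              · rcases adj_mem_pair hNu hadj with h1 | h1
                · exact absurd h1 hzav
                · exact absurd h1 hzax
              · rfl
            · rintro rfl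
              exact ⟨G.adj_symm haza, Or.inr (Or.inr (Or.inr rfl))⟩
          have hcount : (G.neighborSet za ∩ (insert x (G.neighborSet x))ᶜ).ncard
              = deg G za - 1 := by
            rw [ncard_inter_compl, hXxeq, hNzaX, Set.ncard_singleton]
          rw [finsum_mem_singleton, finsum_mem_singleton, hcount, hXxeq, wtSet,
            finsum_mem_quad _ (Ne.symm hvx') (Ne.symm hux) (Ne.symm hax) hvu' (Ne.symm hav)
              (Ne.symm hau),
            wt_of_deg3 hxdeg, wt_of_deg2 hvdeg, wt_of_deg2 hudeg, wt_of_deg2 ha2]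
          have hb := wtd_pred5 (deg_pos_of_adj (G.adj_symm haza))
          have hwz := wt_eq_wtd G za
          omega
      rcases adj_mem_triple hNx huy with h1 | h1 | h1
      · exact absurd h1 (Ne.symm hvu')
      · subst h1
        refine ⟨u, G.adj_symm huy, Ne.symm hvu', hudeg, ?_⟩
        intro w hw1 hw2
        rcases adj_mem_triple hNx (G.adj_symm hw1) with rfl | rfl | rfl
        · exact Or.inl rfl
        · exact Or.inr rfl
        · exact absurd hw2 (fun h2 => ME w hw1 (Ne.symm hx12) hx2v hNx h2)
      · subst h1
        have hNx' : G.neighborSet x = {v, u, x1} := by rw [hNx, Set.pair_comm x1 u]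
        refine ⟨u, G.adj_symm huy, Ne.symm hvu', hudeg, ?_⟩
        intro w hw1 hw2
        rcases adj_mem_triple hNx' (G.adj_symm hw1) with rfl | rfl | rfl
        · exact Or.inl rfl
        · exact Or.inr rfl
        · exact absurd hw2 (fun h2 => ME w hw1 hx12 hx1v hNx' h2)
    · -- branch B : y ≠ x
      have hnux : ¬ G.Adj u x := fun h => hyx (hadjux h)
      have hnxy : ¬ G.Adj x y := by
        intro h
        exact hC4 ⟨v, u, y, x, hvu', Ne.symm hyv, hvx', Ne.symm hyu, hux, hyx,
          hvu, huy, G.adj_symm h, G.adj_symm hvx⟩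
      have hx1u : x1 ≠ u := by rintro rfl; exact hnux (G.adj_symm hxx1)
      have hx2u : x2 ≠ u := by rintro rfl; exact hnux (G.adj_symm hxx2)
      have hx1y : x1 ≠ y := by rintro rfl; exact hnxy hxx1
      have hx2y : x2 ≠ y := by rintro rfl; exact hnxy hxx2
      have hx1x : x1 ≠ x := hxx1.ne'
      have hx2x : x2 ≠ x := hxx2.ne'
      have hnux1 : ¬ G.Adj u x1 := by
        intro h
        rcases adj_mem_pair hNu (G.adj_symm h) with h1 | h1
        · exact hx1v h1
        · exact hx1y h1
      have hnux2 : ¬ G.Adj u x2 := by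
        intro h
        rcases adj_mem_pair hNu (G.adj_symm h) with h1 | h1
        · exact hx2v h1
        · exact hx2y h1
      by_cases hd1 : deg G x1 = 2
      · by_cases hd2 : deg G x2 = 2
        · -- A3 : both degree 2 : contradiction
          exfalso
          obtain ⟨z1, hz1x1', hx1z1, hNx1⟩ := other_nbr_of_deg2 hd1 (G.adj_symm hxx1)
          obtain ⟨z2, hz2x2', hx2z2, hNx2⟩ := other_nbr_of_deg2 hd2 (G.adj_symm hxx2)
          have hz1v : z1 ≠ v := by
            intro e
            rcases adj_mem_pair hNv (e ▸ hx1z1) with e' | e'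
            · exact hx1u e'
            · exact hx1x e'
          have hz2v : z2 ≠ v := by
            intro e
            rcases adj_mem_pair hNv (e ▸ hx2z2) with e' | e'
            · exact hx2u e'
            · exact hx2x e'
          have hz1u : z1 ≠ u := by
            intro e
            rcases adj_mem_pair hNu (e ▸ hx1z1) with e' | e'
            · exact hx1v e'
            · exact hx1y e'
          have hz2u : z2 ≠ u := by
            intro e
            rcases adj_mem_pair hNu (e ▸ hx2z2) with e' | e'
            · exact hx2v e'
            · exact hx2y e'
          have hz1x : z1 ≠ x := hz1x1'
          have hz2x : z2 ≠ x := hz2x2'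
          by_cases hadj12 : G.Adj x1 x2
          · -- M-J
            have e1 : z1 = x2 := by
              rcases adj_mem_pair hNx1 (G.adj_symm hadj12) with e | e
              · exact absurd e hx2x
              · exact e.symm
            have e2 : z2 = x1 := by
              rcases adj_mem_pair hNx2 hadj12 with e | e
              · exact absurd e hx1x
              · exact e.symm
            rw [e1] at hNx1
            rw [e2] at hNx2
            have hXxeq : insert x (G.neighborSet x) = {x, v, x1, x2} := by rw [hNx]
            refine master hG x {u} ?_ ?_ ?_
            · intro w hw
              rw [Set.mem_singleton_iff] at hw; subst hw
              simp only [hXxeq, Set.mem_insert_iff, Set.mem_singleton_iff]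
              push_neg
              exact ⟨hux, Ne.symm hvu', Ne.symm hx1u, Ne.symm hx2u⟩
            · intro z hzX hzD
              rw [Set.mem_singleton_iff] at hzD
              rw [hXxeq] at hzX ⊢
              rw [Set.eq_empty_iff_forall_notMem]
              rintro w ⟨hw1, hw2⟩
              have hadj : G.Adj z w := hw1
              rcases hw2 with rfl | rfl | rfl | rfl
              · rcases adj_mem_triple hNx hadj with rfl | rfl | rfl
                · exact hzX (by simp)
                · exact hzX (by simp)
                · exact hzX (by simp)
              · rcases adj_mem_pair hNv hadj with rfl | rfl
                · exact hzD rfl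
                · exact hzX (by simp)
              · rcases adj_mem_pair hNx1 hadj with rfl | rfl
                · exact hzX (by simp)
                · exact hzX (by simp)
              · rcases adj_mem_pair hNx2 hadj with rfl | rfl
                · exact hzX (by simp)
                · exact hzX (by simp)
            · have hNuX : G.neighborSet u ∩ ({x, v, x1, x2} : Set V) = {v} := by
                ext w
                simp only [Set.mem_inter_iff, SimpleGraph.mem_neighborSet, Set.mem_insert_iff,
                  Set.mem_singleton_iff]
                constructor
                · rintro ⟨hadj, rfl | rfl | rfl | rfl⟩
                  · exact absurd hadj hnux
                  · rfl
                  · exact absurd hadj hnux1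
                  · exact absurd hadj hnux2
                · rintro rfl
                  exact ⟨G.adj_symm hvu, Or.inr (Or.inl rfl)⟩
              have hcu : (G.neighborSet u ∩ (insert x (G.neighborSet x))ᶜ).ncard = 1 := by
                rw [ncard_inter_compl, hXxeq, hNuX, Set.ncard_singleton, hudeg]
              rw [finsum_mem_singleton, finsum_mem_singleton, hcu, hXxeq, wtSet,
                finsum_mem_quad _ (Ne.symm hvx') (Ne.symm hx1x) (Ne.symm hx2x)
                  (Ne.symm hx1v) (Ne.symm hx2v) hx12,
                wt_of_deg3 hxdeg, wt_of_deg2 hvdeg, wt_of_deg2 hd1, wt_of_deg2 hd2,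
                wt_of_deg2 hudeg]
              have h9 : wtd 1 = 9 := rfl
              omega
          · have hz1x2 : z1 ≠ x2 := fun e => hadj12 (e ▸ hx1z1)
            have hz2x1 : z2 ≠ x1 := fun e => hadj12 (G.adj_symm (e ▸ hx2z2))
            have hK : ∀ a b za : V, G.Adj x a → G.Adj x b → a ≠ b → a ≠ v → b ≠ v →
                a ≠ u → b ≠ u → a ≠ x → b ≠ x → ¬G.Adj u b → ¬G.Adj a b →
                G.neighborSet x = {v, a, b} → deg G a = 2 → deg G b = 2 → G.Adj a za →
                za ≠ x → za ≠ v → za ≠ u → za ≠ b → G.neighborSet a = {x, za} →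
                deg G za = 1 → False := by
              intro a b za hxa hxb hab hav hbv hau hbu hax hbx hnub hnab hNxab ha2 hb2
                haza hzax hzav hzau hzab hNa hza1
              have hNza : G.neighborSet za = {a} := nbr_eq_single hza1 (G.adj_symm haza)
              have hXaeq : insert a (G.neighborSet a) = {a, x, za} := by rw [hNa]
              refine master hG a {v, b} ?_ ?_ ?_
              · intro w hw
                rcases hw with rfl | rfl
                · simp only [hXaeq, Set.mem_insert_iff, Set.mem_singleton_iff]
                  push_neg
                  exact ⟨Ne.symm hav, hvx', Ne.symm hzav⟩
                · simp only [hXaeq, Set.mem_insert_iff, Set.mem_singleton_iff]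
                  push_neg
                  exact ⟨Ne.symm hab, hbx, Ne.symm hzab⟩
              · intro z hzX hzD
                simp only [Set.mem_insert_iff, Set.mem_singleton_iff] at hzD
                push_neg at hzD
                rw [hXaeq] at hzX ⊢
                rw [Set.eq_empty_iff_forall_notMem]
                rintro w ⟨hw1, hw2⟩
                have hadj : G.Adj z w := hw1
                rcases hw2 with rfl | rfl | rfl
                · rcases adj_mem_pair hNa hadj with rfl | rfl
                  · exact hzX (by simp)
                  · exact hzX (by simp)
                · rcases adj_mem_triple hNxab hadj with rfl | rfl | rfl
                  · exact hzD.1 rfl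
                  · exact hzX (by simp)
                  · exact hzD.2 rfl
                · rcases adj_mem_single hNza hadj
                  exact hzX (by simp)
              · have hNvX : G.neighborSet v ∩ ({a, x, za} : Set V) = {x} := by
                  ext w
                  simp only [Set.mem_inter_iff, SimpleGraph.mem_neighborSet, Set.mem_insert_iff,
                    Set.mem_singleton_iff]
                  constructor
                  · rintro ⟨hadj, rfl | rfl | rfl⟩
                    · rcases adj_mem_pair hNv (G.adj_symm hadj) with e | e
                      · exact absurd e hau
                      · exact absurd e hax
                    · rfl
                    · rcases adj_mem_pair hNv (G.adj_symm hadj) with e | e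
                      · exact absurd e hzau
                      · exact absurd e hzax
                  · rintro rfl
                    exact ⟨hvx, Or.inr (Or.inl rfl)⟩
                have hNbX : G.neighborSet b ∩ ({a, x, za} : Set V) = {x} := by
                  ext w
                  simp only [Set.mem_inter_iff, SimpleGraph.mem_neighborSet, Set.mem_insert_iff,
                    Set.mem_singleton_iff]
                  constructor
                  · rintro ⟨hadj, rfl | rfl | rfl⟩
                    · exact absurd (G.adj_symm hadj) hnab
                    · rfl
                    · exact absurd (adj_mem_single hNza hadj) (fun e => hab e.symm)
                  · rintro rfl
                    exact ⟨G.adj_symm hxb, Or.inr (Or.inl rfl)⟩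
                have hcv : (G.neighborSet v ∩ (insert a (G.neighborSet a))ᶜ).ncard = 1 := by
                  rw [ncard_inter_compl, hXaeq, hNvX, Set.ncard_singleton, hvdeg]
                have hcb : (G.neighborSet b ∩ (insert a (G.neighborSet a))ᶜ).ncard = 1 := by
                  rw [ncard_inter_compl, hXaeq, hNbX, Set.ncard_singleton, hb2]
                rw [finsum_mem_pair (Ne.symm hbv), finsum_mem_pair (Ne.symm hbv), hcv, hcb,
                  hXaeq, wtSet,
                  finsum_mem_triple _ hax haza.ne (Ne.symm hzax),
                  wt_of_deg2 ha2, wt_of_deg3 hxdeg, wt_of_deg1 hza1, wt_of_deg2 hvdeg,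
                  wt_of_deg2 hb2]
                have h9 : wtd 1 = 9 := rfl
                omega
            by_cases hdz1 : deg G z1 = 1
            · exact hK x1 x2 z1 hxx1 hxx2 hx12 hx1v hx2v hx1u hx2u hx1x hx2x hnux2 hadj12
                hNx hd1 hd2 hx1z1 hz1x hz1v hz1u hz1x2 hNx1 hdz1
            · by_cases hdz2 : deg G z2 = 1
              · exact hK x2 x1 z2 hxx2 hxx1 (Ne.symm hx12) hx2v hx1v hx2u hx1u hx2x hx1x
                  hnux1 (fun h => hadj12 (G.adj_symm h)) (by rw [hNx, Set.pair_comm x1 x2])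
                  hd2 hd1 hx2z2 hz2x hz2v hz2u hz2x1 hNx2 hdz2
              · -- M-L
                have hz12 : z1 ≠ z2 := by
                  intro e
                  exact hC4 ⟨x, x1, z1, x2, Ne.symm hx1x, Ne.symm hz1x, Ne.symm hx2x,
                    hx1z1.ne, hx12, hz1x2, hxx1, hx1z1, by rw [e]; exact G.adj_symm hx2z2,
                    G.adj_symm hxx2⟩
                have hdz1' : 2 ≤ deg G z1 := by
                  have := deg_pos_of_adj (G.adj_symm hx1z1); omega
                have hdz2' : 2 ≤ deg G z2 := by
                  have := deg_pos_of_adj (G.adj_symm hx2z2); omega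
                have hXxeq : insert x (G.neighborSet x) = {x, v, x1, x2} := by rw [hNx]
                refine master hG x {u, z1, z2} ?_ ?_ ?_
                · intro w hw
                  rcases hw with rfl | rfl | rfl
                  · simp only [hXxeq, Set.mem_insert_iff, Set.mem_singleton_iff]
                    push_neg
                    exact ⟨hux, Ne.symm hvu', Ne.symm hx1u, Ne.symm hx2u⟩
                  · simp only [hXxeq, Set.mem_insert_iff, Set.mem_singleton_iff]
                    push_neg
                    exact ⟨hz1x, hz1v, hx1z1.ne', hz1x2⟩
                  · simp only [hXxeq, Set.mem_insert_iff, Set.mem_singleton_iff]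
                    push_neg
                    exact ⟨hz2x, hz2v, hz2x1, hx2z2.ne'⟩
                · intro z hzX hzD
                  simp only [Set.mem_insert_iff, Set.mem_singleton_iff] at hzD
                  push_neg at hzD
                  rw [hXxeq] at hzX ⊢
                  rw [Set.eq_empty_iff_forall_notMem]
                  rintro w ⟨hw1, hw2⟩
                  have hadj : G.Adj z w := hw1
                  rcases hw2 with rfl | rfl | rfl | rfl
                  · rcases adj_mem_triple hNx hadj with rfl | rfl | rfl
                    · exact hzX (by simp)
                    · exact hzX (by simp)
                    · exact hzX (by simp)
                  · rcases adj_mem_pair hNv hadj with rfl | rfl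
                    · exact hzD.1 rfl
                    · exact hzX (by simp)
                  · rcases adj_mem_pair hNx1 hadj with rfl | rfl
                    · exact hzX (by simp)
                    · exact hzD.2.1 rfl
                  · rcases adj_mem_pair hNx2 hadj with rfl | rfl
                    · exact hzX (by simp)
                    · exact hzD.2.2 rfl
                · have hNuX : G.neighborSet u ∩ ({x, v, x1, x2} : Set V) = {v} := by
                    ext w
                    simp only [Set.mem_inter_iff, SimpleGraph.mem_neighborSet,
                      Set.mem_insert_iff, Set.mem_singleton_iff]
                    constructor
                    · rintro ⟨hadj, rfl | rfl | rfl | rfl⟩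
                      · exact absurd hadj hnux
                      · rfl
                      · exact absurd hadj hnux1
                      · exact absurd hadj hnux2
                    · rintro rfl
                      exact ⟨G.adj_symm hvu, Or.inr (Or.inl rfl)⟩
                  have hNz1X : G.neighborSet z1 ∩ ({x, v, x1, x2} : Set V) = {x1} := by
                    ext w
                    simp only [Set.mem_inter_iff, SimpleGraph.mem_neighborSet,
                      Set.mem_insert_iff, Set.mem_singleton_iff]
                    constructor
                    · rintro ⟨hadj, rfl | rfl | rfl | rfl⟩
                      · rcases adj_mem_triple hNx hadj with e | e | e
                        · exact absurd e hz1v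
                        · exact absurd e hx1z1.ne'
                        · exact absurd e hz1x2
                      · rcases adj_mem_pair hNv hadj with e | e
                        · exact absurd e hz1u
                        · exact absurd e hz1x
                      · rfl
                      · rcases adj_mem_pair hNx2 hadj with e | e
                        · exact absurd e hz1x
                        · exact absurd e hz12
                    · rintro rfl
                      exact ⟨G.adj_symm hx1z1, Or.inr (Or.inr (Or.inl rfl))⟩
                  have hNz2X : G.neighborSet z2 ∩ ({x, v, x1, x2} : Set V) = {x2} := by
                    ext w
                    simp only [Set.mem_inter_iff, SimpleGraph.mem_neighborSet,
                      Set.mem_insert_iff, Set.mem_singleton_iff]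
                    constructor
                    · rintro ⟨hadj, rfl | rfl | rfl | rfl⟩
                      · rcases adj_mem_triple hNx hadj with e | e | e
                        · exact absurd e hz2v
                        · exact absurd e hz2x1
                        · exact absurd e hx2z2.ne'
                      · rcases adj_mem_pair hNv hadj with e | e
                        · exact absurd e hz2u
                        · exact absurd e hz2x
                      · rcases adj_mem_pair hNx1 hadj with e | e
                        · exact absurd e hz2x
                        · exact absurd e (Ne.symm hz12)
                      · rfl
                    · rintro rfl
                      exact ⟨G.adj_symm hx2z2, Or.inr (Or.inr (Or.inr rfl))⟩
                  have hcu : (G.neighborSet u ∩ (insert x (G.neighborSet x))ᶜ).ncard = 1 := by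
                    rw [ncard_inter_compl, hXxeq, hNuX, Set.ncard_singleton, hudeg]
                  have hcz1 : (G.neighborSet z1 ∩ (insert x (G.neighborSet x))ᶜ).ncard
                      = deg G z1 - 1 := by
                    rw [ncard_inter_compl, hXxeq, hNz1X, Set.ncard_singleton]
                  have hcz2 : (G.neighborSet z2 ∩ (insert x (G.neighborSet x))ᶜ).ncard
                      = deg G z2 - 1 := by
                    rw [ncard_inter_compl, hXxeq, hNz2X, Set.ncard_singleton]
                  rw [finsum_mem_triple _ (Ne.symm hz1u) (Ne.symm hz2u) hz12,
                    finsum_mem_triple _ (Ne.symm hz1u) (Ne.symm hz2u) hz12, hcu, hcz1, hcz2,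
                    hXxeq, wtSet,
                    finsum_mem_quad _ (Ne.symm hvx') (Ne.symm hx1x) (Ne.symm hx2x)
                      (Ne.symm hx1v) (Ne.symm hx2v) hx12,
                    wt_of_deg3 hxdeg, wt_of_deg2 hvdeg, wt_of_deg2 hd1, wt_of_deg2 hd2,
                    wt_of_deg2 hudeg]
                  have hb1 := wtd_pred3 hdz1'
                  have hb2 := wtd_pred3 hdz2'
                  have hwz1 := wt_eq_wtd G z1
                  have hwz2 := wt_eq_wtd G z2
                  have h9 : wtd 1 = 9 := rfl
                  omega
        · refine ⟨x1, hxx1, hx1v, hd1, ?_⟩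
          intro w hw1 hw2
          rcases adj_mem_triple hNx (G.adj_symm hw1) with rfl | rfl | rfl
          · exact Or.inl rfl
          · exact Or.inr rfl
          · exact absurd hw2 hd2
      · by_cases hd2 : deg G x2 = 2
        · refine ⟨x2, hxx2, hx2v, hd2, ?_⟩
          intro w hw1 hw2
          rcases adj_mem_triple hNx (G.adj_symm hw1) with rfl | rfl | rfl
          · exact Or.inl rfl
          · exact absurd hw2 hd1
          · exact Or.inr rfl
        · -- C3 : neither degree 2 : contradiction
          exfalso
          have hc1 : deg G x1 = 1 ∨ deg G x1 = 3 := by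
            have := hsub x1; have := deg_pos_of_adj (G.adj_symm hxx1); omega
          have hc2 : deg G x2 = 1 ∨ deg G x2 = 3 := by
            have := hsub x2; have := deg_pos_of_adj (G.adj_symm hxx2); omega
          -- (3,3) case
          have hF : deg G x1 = 3 → deg G x2 = 3 → False := by
            intro h1 h2
            refine master hG v {y, x1, x2} ?_ ?_ ?_
            · intro w hw
              rcases hw with rfl | rfl | rfl
              · simp only [hXveq, Set.mem_insert_iff, Set.mem_singleton_iff]
                push_neg
                exact ⟨hyv, hyu, hyx⟩
              · simp only [hXveq, Set.mem_insert_iff, Set.mem_singleton_iff]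
                push_neg
                exact ⟨hx1v, hx1u, hx1x⟩
              · simp only [hXveq, Set.mem_insert_iff, Set.mem_singleton_iff]
                push_neg
                exact ⟨hx2v, hx2u, hx2x⟩
            · intro z hzX hzD
              simp only [Set.mem_insert_iff, Set.mem_singleton_iff] at hzD
              push_neg at hzD
              rw [hXveq] at hzX ⊢
              rw [Set.eq_empty_iff_forall_notMem]
              rintro w ⟨hw1, hw2⟩
              have hadj : G.Adj z w := hw1
              rcases hw2 with rfl | rfl | rfl
              · rcases adj_mem_pair hNv hadj with rfl | rfl
                · exact hzX (by simp)
                · exact hzX (by simp)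
              · rcases adj_mem_pair hNu hadj with rfl | rfl
                · exact hzX (by simp)
                · exact hzD.1 rfl
              · rcases adj_mem_triple hNx hadj with rfl | rfl | rfl
                · exact hzX (by simp)
                · exact hzD.2.1 rfl
                · exact hzD.2.2 rfl
            · have hNyX : G.neighborSet y ∩ ({v, u, x} : Set V) = {u} := by
                ext w
                simp only [Set.mem_inter_iff, SimpleGraph.mem_neighborSet, Set.mem_insert_iff,
                  Set.mem_singleton_iff]
                constructor
                · rintro ⟨hadj, rfl | rfl | rfl⟩
                  · rcases adj_mem_pair hNv hadj with e | e
                    · exact absurd e hyu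
                    · exact absurd e hyx
                  · rfl
                  · exact absurd (G.adj_symm hadj) hnxy
                · rintro rfl
                  exact ⟨G.adj_symm huy, Or.inr (Or.inl rfl)⟩
              have hN1X : G.neighborSet x1 ∩ ({v, u, x} : Set V) = {x} := by
                ext w
                simp only [Set.mem_inter_iff, SimpleGraph.mem_neighborSet, Set.mem_insert_iff,
                  Set.mem_singleton_iff]
                constructor
                · rintro ⟨hadj, rfl | rfl | rfl⟩
                  · rcases adj_mem_pair hNv hadj with e | e
                    · exact absurd e hx1u
                    · exact absurd e hx1x
                  · exact absurd (G.adj_symm hadj) hnux1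
                  · rfl
                · rintro rfl
                  exact ⟨G.adj_symm hxx1, Or.inr (Or.inr rfl)⟩
              have hN2X : G.neighborSet x2 ∩ ({v, u, x} : Set V) = {x} := by
                ext w
                simp only [Set.mem_inter_iff, SimpleGraph.mem_neighborSet, Set.mem_insert_iff,
                  Set.mem_singleton_iff]
                constructor
                · rintro ⟨hadj, rfl | rfl | rfl⟩
                  · rcases adj_mem_pair hNv hadj with e | e
                    · exact absurd e hx2u
                    · exact absurd e hx2x
                  · exact absurd (G.adj_symm hadj) hnux2
                  · rfl
                · rintro rfl
                  exact ⟨G.adj_symm hxx2, Or.inr (Or.inr rfl)⟩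
              have hcy : (G.neighborSet y ∩ (insert v (G.neighborSet v))ᶜ).ncard = 2 := by
                rw [ncard_inter_compl, hXveq, hNyX, Set.ncard_singleton, hydeg]
              have hcx1 : (G.neighborSet x1 ∩ (insert v (G.neighborSet v))ᶜ).ncard = 2 := by
                rw [ncard_inter_compl, hXveq, hN1X, Set.ncard_singleton, h1]
              have hcx2 : (G.neighborSet x2 ∩ (insert v (G.neighborSet v))ᶜ).ncard = 2 := by
                rw [ncard_inter_compl, hXveq, hN2X, Set.ncard_singleton, h2]
              rw [finsum_mem_triple _ (Ne.symm hx1y) (Ne.symm hx2y) hx12,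
                finsum_mem_triple _ (Ne.symm hx1y) (Ne.symm hx2y) hx12, hcy, hcx1, hcx2,
                hXveq, wtSet, finsum_mem_triple _ hvu' hvx' hux, wt_of_deg2 hvdeg,
                wt_of_deg2 hudeg, wt_of_deg3 hxdeg, wt_of_deg3 hydeg, wt_of_deg3 h1,
                wt_of_deg3 h2]
              have h6 : wtd 2 = 6 := rfl
              omega
          -- (1,1) case
          have hII : deg G x1 = 1 → deg G x2 = 1 → False := by
            intro h1 h2
            have hNx1 : G.neighborSet x1 = {x} := nbr_eq_single h1 (G.adj_symm hxx1)
            have hNx2 : G.neighborSet x2 = {x} := nbr_eq_single h2 (G.adj_symm hxx2)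
            have hXxeq : insert x (G.neighborSet x) = {x, v, x1, x2} := by rw [hNx]
            refine master hG x {u} ?_ ?_ ?_
            · intro w hw
              rw [Set.mem_singleton_iff] at hw; subst hw
              simp only [hXxeq, Set.mem_insert_iff, Set.mem_singleton_iff]
              push_neg
              exact ⟨hux, Ne.symm hvu', Ne.symm hx1u, Ne.symm hx2u⟩
            · intro z hzX hzD
              rw [Set.mem_singleton_iff] at hzD
              rw [hXxeq] at hzX ⊢
              rw [Set.eq_empty_iff_forall_notMem]
              rintro w ⟨hw1, hw2⟩
              have hadj : G.Adj z w := hw1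
              rcases hw2 with rfl | rfl | rfl | rfl
              · rcases adj_mem_triple hNx hadj with rfl | rfl | rfl
                · exact hzX (by simp)
                · exact hzX (by simp)
                · exact hzX (by simp)
              · rcases adj_mem_pair hNv hadj with rfl | rfl
                · exact hzD rfl
                · exact hzX (by simp)
              · rcases adj_mem_single hNx1 hadj
                exact hzX (by simp)
              · rcases adj_mem_single hNx2 hadj
                exact hzX (by simp)
            · have hNuX : G.neighborSet u ∩ ({x, v, x1, x2} : Set V) = {v} := by
                ext w
                simp only [Set.mem_inter_iff, SimpleGraph.mem_neighborSet, Set.mem_insert_iff,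
                  Set.mem_singleton_iff]
                constructor
                · rintro ⟨hadj, rfl | rfl | rfl | rfl⟩
                  · exact absurd hadj hnux
                  · rfl
                  · exact absurd hadj hnux1
                  · exact absurd hadj hnux2
                · rintro rfl
                  exact ⟨G.adj_symm hvu, Or.inr (Or.inl rfl)⟩
              have hcu : (G.neighborSet u ∩ (insert x (G.neighborSet x))ᶜ).ncard = 1 := by
                rw [ncard_inter_compl, hXxeq, hNuX, Set.ncard_singleton, hudeg]
              rw [finsum_mem_singleton, finsum_mem_singleton, hcu, hXxeq, wtSet,
                finsum_mem_quad _ (Ne.symm hvx') (Ne.symm hx1x) (Ne.symm hx2x)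
                  (Ne.symm hx1v) (Ne.symm hx2v) hx12,
                wt_of_deg3 hxdeg, wt_of_deg2 hvdeg, wt_of_deg1 h1, wt_of_deg1 h2,
                wt_of_deg2 hudeg]
              have h9 : wtd 1 = 9 := rfl
              omega
          -- (1,3) case (symmetric in the two roles)
          have hGH : ∀ a b : V, G.Adj x a → G.Adj x b → a ≠ b → a ≠ v → b ≠ v → a ≠ u →
              b ≠ u → a ≠ x → b ≠ x → ¬G.Adj u a → ¬G.Adj u b →
              G.neighborSet x = {v, a, b} → deg G a = 1 → deg G b = 3 → False := by
            intro a b hxa hxb hab hav hbv hau hbu hax hbx hnua hnub hNxab ha1 hb3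
            have hNa : G.neighborSet a = {x} := nbr_eq_single ha1 (G.adj_symm hxa)
            obtain ⟨w1, w2, hw1x, hw2x, hw12, hbw1, hbw2, hNb⟩ :=
              other_nbrs_of_deg3 hb3 (G.adj_symm hxb)
            have hw1v : w1 ≠ v := by
              intro e
              rcases adj_mem_pair hNv (e ▸ hbw1) with e' | e'
              · exact hbu e'
              · exact hbx e'
            have hw2v : w2 ≠ v := by
              intro e
              rcases adj_mem_pair hNv (e ▸ hbw2) with e' | e'
              · exact hbu e'
              · exact hbx e'
            have hw1u : w1 ≠ u := by
              intro e
              exact hnub (G.adj_symm (e ▸ hbw1))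
            have hw2u : w2 ≠ u := by
              intro e
              exact hnub (G.adj_symm (e ▸ hbw2))
            have hw1a : w1 ≠ a := by
              intro e
              exact hbx (adj_mem_single hNa (e ▸ hbw1))
            have hw2a : w2 ≠ a := by
              intro e
              exact hbx (adj_mem_single hNa (e ▸ hbw2))
            have hnvb : ¬ G.Adj v b := by
              intro h
              rcases adj_mem_pair hNv (G.adj_symm h) with e | e
              · exact hbu e
              · exact hbx e
            by_cases hw11 : deg G w1 = 1 ∧ deg G w2 = 1
            · -- M-H
              have hNw1 : G.neighborSet w1 = {b} := nbr_eq_single hw11.1 (G.adj_symm hbw1)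
              have hNw2 : G.neighborSet w2 = {b} := nbr_eq_single hw11.2 (G.adj_symm hbw2)
              have hXbeq : insert b (G.neighborSet b) = {b, x, w1, w2} := by rw [hNb]
              refine master hG b {v, a} ?_ ?_ ?_
              · intro w hw
                rcases hw with rfl | rfl
                · simp only [hXbeq, Set.mem_insert_iff, Set.mem_singleton_iff]
                  push_neg
                  exact ⟨Ne.symm hbv, hvx', Ne.symm hw1v, Ne.symm hw2v⟩
                · simp only [hXbeq, Set.mem_insert_iff, Set.mem_singleton_iff]
                  push_neg
                  exact ⟨hab, hax, Ne.symm hw1a, Ne.symm hw2a⟩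
              · intro z hzX hzD
                simp only [Set.mem_insert_iff, Set.mem_singleton_iff] at hzD
                push_neg at hzD
                rw [hXbeq] at hzX ⊢
                rw [Set.eq_empty_iff_forall_notMem]
                rintro w ⟨hw1', hw2'⟩
                have hadj : G.Adj z w := hw1'
                rcases hw2' with rfl | rfl | rfl | rfl
                · rcases adj_mem_triple hNb hadj with rfl | rfl | rfl
                  · exact hzX (by simp)
                  · exact hzX (by simp)
                  · exact hzX (by simp)
                · rcases adj_mem_triple hNxab hadj with rfl | rfl | rfl
                  · exact hzD.1 rfl
                  · exact hzD.2 rfl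
                  · exact hzX (by simp)
                · rcases adj_mem_single hNw1 hadj
                  exact hzX (by simp)
                · rcases adj_mem_single hNw2 hadj
                  exact hzX (by simp)
              · have hNvX : G.neighborSet v ∩ ({b, x, w1, w2} : Set V) = {x} := by
                  ext w
                  simp only [Set.mem_inter_iff, SimpleGraph.mem_neighborSet, Set.mem_insert_iff,
                    Set.mem_singleton_iff]
                  constructor
                  · rintro ⟨hadj, rfl | rfl | rfl | rfl⟩
                    · exact absurd hadj hnvb
                    · rfl
                    · exact absurd (adj_mem_single hNw1 hadj) (Ne.symm hbv)
                    · exact absurd (adj_mem_single hNw2 hadj) (Ne.symm hbv)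
                  · rintro rfl
                    exact ⟨hvx, Or.inr (Or.inl rfl)⟩
                have hNaX : G.neighborSet a ∩ ({b, x, w1, w2} : Set V) = {x} := by
                  rw [hNa]
                  ext w
                  simp only [Set.mem_inter_iff, Set.mem_insert_iff, Set.mem_singleton_iff]
                  constructor
                  · rintro ⟨rfl, _⟩
                    rfl
                  · rintro rfl
                    exact ⟨rfl, Or.inr (Or.inl rfl)⟩
                have hcv : (G.neighborSet v ∩ (insert b (G.neighborSet b))ᶜ).ncard = 1 := by
                  rw [ncard_inter_compl, hXbeq, hNvX, Set.ncard_singleton, hvdeg]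
                have hca : (G.neighborSet a ∩ (insert b (G.neighborSet b))ᶜ).ncard = 0 := by
                  rw [ncard_inter_compl, hXbeq, hNaX, Set.ncard_singleton, ha1]
                rw [finsum_mem_pair (Ne.symm hav), finsum_mem_pair (Ne.symm hav), hcv, hca,
                  hXbeq, wtSet,
                  finsum_mem_quad _ hbx (hbw1.ne) (hbw2.ne) (Ne.symm hw1x) (Ne.symm hw2x) hw12,
                  wt_of_deg3 hb3, wt_of_deg3 hxdeg, wt_of_deg1 hw11.1, wt_of_deg1 hw11.2,
                  wt_of_deg2 hvdeg, wt_of_deg1 ha1]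
                have h9 : wtd 1 = 9 := rfl
                have h14 : wtd 0 = 14 := rfl
                omega
            · -- M-G
              have hXxeq : insert x (G.neighborSet x) = {x, v, a, b} := by rw [hNxab]
              refine master hG x {u, w1, w2} ?_ ?_ ?_
              · intro w hw
                rcases hw with rfl | rfl | rfl
                · simp only [hXxeq, Set.mem_insert_iff, Set.mem_singleton_iff]
                  push_neg
                  exact ⟨hux, Ne.symm hvu', Ne.symm hau, Ne.symm hbu⟩
                · simp only [hXxeq, Set.mem_insert_iff, Set.mem_singleton_iff]
                  push_neg
                  exact ⟨hw1x, hw1v, hw1a, hbw1.ne'⟩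
                · simp only [hXxeq, Set.mem_insert_iff, Set.mem_singleton_iff]
                  push_neg
                  exact ⟨hw2x, hw2v, hw2a, hbw2.ne'⟩
              · intro z hzX hzD
                simp only [Set.mem_insert_iff, Set.mem_singleton_iff] at hzD
                push_neg at hzD
                rw [hXxeq] at hzX ⊢
                rw [Set.eq_empty_iff_forall_notMem]
                rintro w ⟨hw1', hw2'⟩
                have hadj : G.Adj z w := hw1'
                rcases hw2' with rfl | rfl | rfl | rfl
                · rcases adj_mem_triple hNxab hadj with rfl | rfl | rfl
                  · exact hzX (by simp)
                  · exact hzX (by simp)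
                  · exact hzX (by simp)
                · rcases adj_mem_pair hNv hadj with rfl | rfl
                  · exact hzD.1 rfl
                  · exact hzX (by simp)
                · rcases adj_mem_single hNa hadj
                  exact hzX (by simp)
                · rcases adj_mem_triple hNb hadj with rfl | rfl | rfl
                  · exact hzX (by simp)
                  · exact hzD.2.1 rfl
                  · exact hzD.2.2 rfl
              · have hNuX : G.neighborSet u ∩ ({x, v, a, b} : Set V) = {v} := by
                  ext w
                  simp only [Set.mem_inter_iff, SimpleGraph.mem_neighborSet, Set.mem_insert_iff,
                    Set.mem_singleton_iff]
                  constructor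
                  · rintro ⟨hadj, rfl | rfl | rfl | rfl⟩
                    · exact absurd hadj hnux
                    · rfl
                    · exact absurd hadj hnua
                    · exact absurd hadj hnub
                  · rintro rfl
                    exact ⟨G.adj_symm hvu, Or.inr (Or.inl rfl)⟩
                have hNw1X : G.neighborSet w1 ∩ ({x, v, a, b} : Set V) = {b} := by
                  ext w
                  simp only [Set.mem_inter_iff, SimpleGraph.mem_neighborSet, Set.mem_insert_iff,
                    Set.mem_singleton_iff]
                  constructor
                  · rintro ⟨hadj, rfl | rfl | rfl | rfl⟩
                    · rcases adj_mem_triple hNxab hadj with e | e | e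
                      · exact absurd e hw1v
                      · exact absurd e hw1a
                      · exact absurd e hbw1.ne'
                    · rcases adj_mem_pair hNv hadj with e | e
                      · exact absurd e hw1u
                      · exact absurd e hw1x
                    · exact absurd (adj_mem_single hNa hadj) hw1x
                    · rfl
                  · rintro rfl
                    exact ⟨G.adj_symm hbw1, Or.inr (Or.inr (Or.inr rfl))⟩
                have hNw2X : G.neighborSet w2 ∩ ({x, v, a, b} : Set V) = {b} := by
                  ext w
                  simp only [Set.mem_inter_iff, SimpleGraph.mem_neighborSet, Set.mem_insert_iff,
                    Set.mem_singleton_iff]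
                  constructor
                  · rintro ⟨hadj, rfl | rfl | rfl | rfl⟩
                    · rcases adj_mem_triple hNxab hadj with e | e | e
                      · exact absurd e hw2v
                      · exact absurd e hw2a
                      · exact absurd e hbw2.ne'
                    · rcases adj_mem_pair hNv hadj with e | e
                      · exact absurd e hw2u
                      · exact absurd e hw2x
                    · exact absurd (adj_mem_single hNa hadj) hw2x
                    · rfl
                  · rintro rfl
                    exact ⟨G.adj_symm hbw2, Or.inr (Or.inr (Or.inr rfl))⟩
                have hcu : (G.neighborSet u ∩ (insert x (G.neighborSet x))ᶜ).ncard = 1 := by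
                  rw [ncard_inter_compl, hXxeq, hNuX, Set.ncard_singleton, hudeg]
                have hcw1 : (G.neighborSet w1 ∩ (insert x (G.neighborSet x))ᶜ).ncard
                    = deg G w1 - 1 := by
                  rw [ncard_inter_compl, hXxeq, hNw1X, Set.ncard_singleton]
                have hcw2 : (G.neighborSet w2 ∩ (insert x (G.neighborSet x))ᶜ).ncard
                    = deg G w2 - 1 := by
                  rw [ncard_inter_compl, hXxeq, hNw2X, Set.ncard_singleton]
                rw [finsum_mem_triple _ (Ne.symm hw1u) (Ne.symm hw2u) hw12,
                  finsum_mem_triple _ (Ne.symm hw1u) (Ne.symm hw2u) hw12, hcu, hcw1, hcw2,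
                  hXxeq, wtSet,
                  finsum_mem_quad _ (Ne.symm hvx') (Ne.symm hax) (Ne.symm hbx)
                    (Ne.symm hav) (Ne.symm hbv) hab,
                  wt_of_deg3 hxdeg, wt_of_deg2 hvdeg, wt_of_deg1 ha1, wt_of_deg3 hb3,
                  wt_of_deg2 hudeg]
                have hkey := wtd_two_drops (deg_pos_of_adj (G.adj_symm hbw1))
                  (deg_pos_of_adj (G.adj_symm hbw2)) hw11
                have hww1 := wt_eq_wtd G w1
                have hww2 := wt_eq_wtd G w2
                have h9 : wtd 1 = 9 := rfl
                omega
          rcases hc1 with h1 | h1 <;> rcases hc2 with h2 | h2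
          · exact hII h1 h2
          · exact hGH x1 x2 hxx1 hxx2 hx12 hx1v hx2v hx1u hx2u hx1x hx2x hnux1 hnux2
              hNx h1 h2
          · exact hGH x2 x1 hxx2 hxx1 (Ne.symm hx12) hx2v hx1v hx2u hx1u hx2x hx1x
              hnux2 hnux1 (by rw [hNx, Set.pair_comm x1 x2]) h2 h1
          · exact hF h1 h2
  obtain ⟨c, hxc, hcv, hcdeg, hcuniq⟩ := hmain
  refine ⟨⟨c, ⟨hcv, x, hvx, hxc⟩, hcdeg⟩, ⟨u, hvu, huB1⟩, ⟨x, hvx, hxdeg, ?_⟩⟩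
  have h : {w | G.Adj x w ∧ deg G w = 2} = {v, c} := by
    ext w
    simp only [Set.mem_setOf_eq, Set.mem_insert_iff, Set.mem_singleton_iff]
    constructor
    · rintro ⟨h1, h2⟩
      exact hcuniq w h1 h2
    · rintro (rfl | rfl)
      · exact ⟨G.adj_symm hvx, hvdeg⟩
      · exact ⟨hxc, hcdeg⟩
  rw [h, Set.ncard_pair (Ne.symm hcv)]
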